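/- Let G and H be finite simple graphs such that H has at least one vertex, and let h be a surjective p-morphism from Pos(G) onto Pos(H). Then h(E_1^G ∪ E_2^G) ⊆ E_1^H ∪ E_2^H, i.e., every edge-copy element of Pos(G) is mapped by h to an edge-copy element of Pos(H). -/
import Mathlib


/-- The carrier of the poset `Pos(G)`: vertices, two copies of the vertices,
two copies of the edges, and four auxiliary elements. -/
inductive PosElem (V E : Type) : Type where
  | ver (v : V)
  | verA (v : V)
  | verB (v : V)
  | edge1 (e : E)
  | edge2 (e : E)
  | top1
  | top2
  | infA
  | infB

/-- The covering relation of the poset `Pos(G)`, for a graph `G` together with a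
choice `ε` of an ordered pair of endpoints for each edge. -/
inductive PosCov {V : Type} (G : SimpleGraph V) (ε : ↥G.edgeSet → V × V) :
    PosElem V ↥G.edgeSet → PosElem V ↥G.edgeSet → Prop where
  | ver_verA (v : V) : PosCov G ε (.ver v) (.verA v)
  | ver_verB (v : V) : PosCov G ε (.ver v) (.verB v)
  | verA_infA (v : V) : PosCov G ε (.verA v) .infA
  | verB_infB (v : V) : PosCov G ε (.verB v) .infB
  | edge1_top1 (e : ↥G.edgeSet) : PosCov G ε (.edge1 e) .top1
  | edge1_top2 (e : ↥G.edgeSet) : PosCov G ε (.edge1 e) .top2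
  | edge2_top1 (e : ↥G.edgeSet) : PosCov G ε (.edge2 e) .top1
  | edge2_top2 (e : ↥G.edgeSet) : PosCov G ε (.edge2 e) .top2
  | isolA_top1 (v : V) (hv : ∀ w, ¬ G.Adj v w) : PosCov G ε (.verA v) .top1
  | isolA_top2 (v : V) (hv : ∀ w, ¬ G.Adj v w) : PosCov G ε (.verA v) .top2
  | isolB_top1 (v : V) (hv : ∀ w, ¬ G.Adj v w) : PosCov G ε (.verB v) .top1
  | isolB_top2 (v : V) (hv : ∀ w, ¬ G.Adj v w) : PosCov G ε (.verB v) .top2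
  | ua_edge1 (e : ↥G.edgeSet) : PosCov G ε (.verA (ε e).1) (.edge1 e)
  | vb_edge1 (e : ↥G.edgeSet) : PosCov G ε (.verB (ε e).2) (.edge1 e)
  | ub_edge2 (e : ↥G.edgeSet) : PosCov G ε (.verB (ε e).1) (.edge2 e)
  | va_edge2 (e : ↥G.edgeSet) : PosCov G ε (.verA (ε e).2) (.edge2 e)

/-- The order of `Pos(G)`: the reflexive-transitive closure of the covering relation. -/
def PosLe {V : Type} (G : SimpleGraph V) (ε : ↥G.edgeSet → V × V)
    (x y : PosElem V ↥G.edgeSet) : Prop :=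
  Relation.ReflTransGen (PosCov G ε) x y

/-- `ε` assigns to every edge an ordered pair of its two endpoints. -/
def OrientOK {V : Type} (G : SimpleGraph V) (ε : ↥G.edgeSet → V × V) : Prop :=
  ∀ e : ↥G.edgeSet, (e : Sym2 V) = s((ε e).1, (ε e).2)

/-- A p-morphism with respect to given order relations: the homomorphism property (HP)
and the backward property (BP). -/
def IsPMorphismRel {α β : Type} (leP : α → α → Prop) (leQ : β → β → Prop)
    (h : α → β) : Prop :=
  (∀ x y, leP x y → leQ (h x) (h y)) ∧
  (∀ (x : α) (y : β), leQ (h x) y → ∃ z : α, leP x z ∧ h z = y)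

-- maximal elements
lemma le_of_max {V : Type} {G : SimpleGraph V} {ε : ↥G.edgeSet → V × V}
    {m y : PosElem V ↥G.edgeSet}
    (hm : m = PosElem.top1 ∨ m = .top2 ∨ m = .infA ∨ m = .infB)
    (hle : PosLe G ε m y) : y = m := by
  induction hle with
  | refl => rfl
  | tail _ hcov ih =>
    subst ih
    rcases hm with rfl | rfl | rfl | rfl <;> cases hcov

lemma upset_edge {V : Type} {G : SimpleGraph V} {ε : ↥G.edgeSet → V × V}
    {e : ↥G.edgeSet} {x y : PosElem V ↥G.edgeSet}
    (hx : x = PosElem.edge1 e ∨ x = PosElem.edge2 e)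
    (hle : PosLe G ε x y) : y = x ∨ y = .top1 ∨ y = .top2 := by
  induction hle with
  | refl => exact Or.inl rfl
  | tail _ hcov ih =>
    rcases ih with rfl | rfl | rfl
    · rcases hx with rfl | rfl <;> cases hcov <;> simp
    · cases hcov
    · cases hcov

lemma le_some_max {V : Type} (G : SimpleGraph V) (ε : ↥G.edgeSet → V × V)
    (x : PosElem V ↥G.edgeSet) :
    PosLe G ε x .top1 ∨ PosLe G ε x .top2 ∨ PosLe G ε x .infA ∨ PosLe G ε x .infB := by
  cases x with
  | ver v => exact Or.inr (Or.inr (Or.inl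
      (Relation.ReflTransGen.head (PosCov.ver_verA v)
        (Relation.ReflTransGen.single (PosCov.verA_infA v)))))
  | verA v => exact Or.inr (Or.inr (Or.inl (Relation.ReflTransGen.single (PosCov.verA_infA v))))
  | verB v => exact Or.inr (Or.inr (Or.inr (Relation.ReflTransGen.single (PosCov.verB_infB v))))
  | edge1 e => exact Or.inl (Relation.ReflTransGen.single (PosCov.edge1_top1 e))
  | edge2 e => exact Or.inl (Relation.ReflTransGen.single (PosCov.edge2_top1 e))
  | top1 => exact Or.inl Relation.ReflTransGen.refl
  | top2 => exact Or.inr (Or.inl Relation.ReflTransGen.refl)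
  | infA => exact Or.inr (Or.inr (Or.inl Relation.ReflTransGen.refl))
  | infB => exact Or.inr (Or.inr (Or.inr Relation.ReflTransGen.refl))

lemma verA_le_top {V : Type} {G : SimpleGraph V} {ε : ↥G.edgeSet → V × V}
    (hε : OrientOK G ε) (v : V) :
    PosLe G ε (.verA v) .top1 ∧ PosLe G ε (.verA v) .top2 := by
  by_cases hv : ∀ w, ¬ G.Adj v w
  · exact ⟨Relation.ReflTransGen.single (PosCov.isolA_top1 v hv),
      Relation.ReflTransGen.single (PosCov.isolA_top2 v hv)⟩
  · push_neg at hv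
    obtain ⟨w, hw⟩ := hv
    set e : ↥G.edgeSet := ⟨s(v, w), (SimpleGraph.mem_edgeSet G).2 hw⟩ with he
    have h1 : s(v, w) = s((ε e).1, (ε e).2) := hε e
    rw [Sym2.eq_iff] at h1
    rcases h1 with ⟨h1, _⟩ | ⟨h1, _⟩
    · refine ⟨Relation.ReflTransGen.head ?_ (Relation.ReflTransGen.single (PosCov.edge1_top1 e)),
        Relation.ReflTransGen.head ?_ (Relation.ReflTransGen.single (PosCov.edge1_top2 e))⟩ <;>
      · rw [h1]; exact PosCov.ua_edge1 e
    · refine ⟨Relation.ReflTransGen.head ?_ (Relation.ReflTransGen.single (PosCov.edge2_top1 e)),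
        Relation.ReflTransGen.head ?_ (Relation.ReflTransGen.single (PosCov.edge2_top2 e))⟩ <;>
      · rw [h1]; exact PosCov.va_edge2 e

lemma verB_le_top {V : Type} {G : SimpleGraph V} {ε : ↥G.edgeSet → V × V}
    (hε : OrientOK G ε) (v : V) :
    PosLe G ε (.verB v) .top1 ∧ PosLe G ε (.verB v) .top2 := by
  by_cases hv : ∀ w, ¬ G.Adj v w
  · exact ⟨Relation.ReflTransGen.single (PosCov.isolB_top1 v hv),
      Relation.ReflTransGen.single (PosCov.isolB_top2 v hv)⟩
  · push_neg at hv
    obtain ⟨w, hw⟩ := hv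
    set e : ↥G.edgeSet := ⟨s(v, w), (SimpleGraph.mem_edgeSet G).2 hw⟩ with he
    have h1 : s(v, w) = s((ε e).1, (ε e).2) := hε e
    rw [Sym2.eq_iff] at h1
    rcases h1 with ⟨h1, _⟩ | ⟨h1, _⟩
    · refine ⟨Relation.ReflTransGen.head ?_ (Relation.ReflTransGen.single (PosCov.edge2_top1 e)),
        Relation.ReflTransGen.head ?_ (Relation.ReflTransGen.single (PosCov.edge2_top2 e))⟩ <;>
      · rw [h1]; exact PosCov.ub_edge2 e
    · refine ⟨Relation.ReflTransGen.head ?_ (Relation.ReflTransGen.single (PosCov.edge1_top1 e)),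
        Relation.ReflTransGen.head ?_ (Relation.ReflTransGen.single (PosCov.edge1_top2 e))⟩ <;>
      · rw [h1]; exact PosCov.vb_edge1 e

set_option maxHeartbeats 1600000 in
theorem edges_map_into_edges {VG VH : Type} [Fintype VG] [Fintype VH] [Nonempty VH]
    (G : SimpleGraph VG) (H : SimpleGraph VH)
    (εG : ↥G.edgeSet → VG × VG) (hεG : OrientOK G εG)
    (εH : ↥H.edgeSet → VH × VH) (hεH : OrientOK H εH)
    (h : PosElem VG ↥G.edgeSet → PosElem VH ↥H.edgeSet)
    (hsurj : Function.Surjective h)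
    (hpm : IsPMorphismRel (PosLe G εG) (PosLe H εH) h) :
    ∀ x : PosElem VG ↥G.edgeSet,
      (∃ e : ↥G.edgeSet, x = PosElem.edge1 e ∨ x = PosElem.edge2 e) →
      ∃ f : ↥H.edgeSet, h x = PosElem.edge1 f ∨ h x = PosElem.edge2 f := by
  obtain ⟨hHP, hBP⟩ := hpm
  -- Step A: every maximal element of Pos(H) is the image of a maximal element of Pos(G)
  have stepA : ∀ m : PosElem VH ↥H.edgeSet,
      (m = PosElem.top1 ∨ m = .top2 ∨ m = .infA ∨ m = .infB) →
      m = h .top1 ∨ m = h .top2 ∨ m = h .infA ∨ m = h .infB := by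
    intro m hm
    obtain ⟨x, rfl⟩ := hsurj m
    rcases le_some_max G εG x with hx | hx | hx | hx
    · exact Or.inl (le_of_max hm (hHP _ _ hx)).symm
    · exact Or.inr (Or.inl (le_of_max hm (hHP _ _ hx)).symm)
    · exact Or.inr (Or.inr (Or.inl (le_of_max hm (hHP _ _ hx)).symm))
    · exact Or.inr (Or.inr (Or.inr (le_of_max hm (hHP _ _ hx)).symm))
  -- Step B: h top1 ≠ h top2
  have hne : h PosElem.top1 ≠ h PosElem.top2 := by
    intro heq
    have A1 := stepA .top1 (Or.inl rfl)
    have A2 := stepA .top2 (Or.inr (Or.inl rfl))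
    have A3 := stepA .infA (Or.inr (Or.inr (Or.inl rfl)))
    have A4 := stepA .infB (Or.inr (Or.inr (Or.inr rfl)))
    rw [← heq] at A1 A2 A3 A4
    have B1 : (PosElem.top1 : PosElem VH ↥H.edgeSet) = h .top1 ∨
        PosElem.top1 = h .infA ∨ PosElem.top1 = h .infB := by
      rcases A1 with a | a | a | a
      exacts [Or.inl a, Or.inl a, Or.inr (Or.inl a), Or.inr (Or.inr a)]
    have B2 : (PosElem.top2 : PosElem VH ↥H.edgeSet) = h .top1 ∨
        PosElem.top2 = h .infA ∨ PosElem.top2 = h .infB := by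
      rcases A2 with a | a | a | a
      exacts [Or.inl a, Or.inl a, Or.inr (Or.inl a), Or.inr (Or.inr a)]
    have B3 : (PosElem.infA : PosElem VH ↥H.edgeSet) = h .top1 ∨
        PosElem.infA = h .infA ∨ PosElem.infA = h .infB := by
      rcases A3 with a | a | a | a
      exacts [Or.inl a, Or.inl a, Or.inr (Or.inl a), Or.inr (Or.inr a)]
    have B4 : (PosElem.infB : PosElem VH ↥H.edgeSet) = h .top1 ∨
        PosElem.infB = h .infA ∨ PosElem.infB = h .infB := by
      rcases A4 with a | a | a | a
      exacts [Or.inl a, Or.inl a, Or.inr (Or.inl a), Or.inr (Or.inr a)]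
    rcases B1 with B1 | B1 | B1 <;> rcases B2 with B2 | B2 | B2 <;>
      rcases B3 with B3 | B3 | B3 <;> rcases B4 with B4 | B4 | B4 <;>
      first
        | exact absurd (B1.trans B2.symm) (by simp)
        | exact absurd (B1.trans B3.symm) (by simp)
        | exact absurd (B1.trans B4.symm) (by simp)
        | exact absurd (B2.trans B3.symm) (by simp)
        | exact absurd (B2.trans B4.symm) (by simp)
        | exact absurd (B3.trans B4.symm) (by simp)
  -- main
  rintro x ⟨e, hx⟩
  have hx1 : PosLe G εG x .top1 := by
    rcases hx with rfl | rfl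
    · exact Relation.ReflTransGen.single (PosCov.edge1_top1 e)
    · exact Relation.ReflTransGen.single (PosCov.edge2_top1 e)
  have hx2 : PosLe G εG x .top2 := by
    rcases hx with rfl | rfl
    · exact Relation.ReflTransGen.single (PosCov.edge1_top2 e)
    · exact Relation.ReflTransGen.single (PosCov.edge2_top2 e)
  have hy1 : PosLe H εH (h x) (h .top1) := hHP _ _ hx1
  have hy2 : PosLe H εH (h x) (h .top2) := hHP _ _ hx2
  have hup : ∀ w, PosLe H εH (h x) w → w = h x ∨ w = h .top1 ∨ w = h .top2 := by
    intro w hw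
    obtain ⟨z, hz, rfl⟩ := hBP x w hw
    rcases upset_edge hx hz with rfl | rfl | rfl
    · exact Or.inl rfl
    · exact Or.inr (Or.inl rfl)
    · exact Or.inr (Or.inr rfl)
  rcases hhx : h x with v | v | v | f | f | _ | _ | _ | _
  case edge1 => exact ⟨f, Or.inl rfl⟩
  case edge2 => exact ⟨f, Or.inr rfl⟩
  case top1 =>
    rw [hhx] at hy1 hy2
    have e1 := le_of_max (Or.inl rfl) hy1
    have e2 := le_of_max (Or.inl rfl) hy2
    exact absurd (e1.trans e2.symm) hne
  case top2 =>
    rw [hhx] at hy1 hy2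
    have e1 := le_of_max (Or.inr (Or.inl rfl)) hy1
    have e2 := le_of_max (Or.inr (Or.inl rfl)) hy2
    exact absurd (e1.trans e2.symm) hne
  case infA =>
    rw [hhx] at hy1 hy2
    have e1 := le_of_max (Or.inr (Or.inr (Or.inl rfl))) hy1
    have e2 := le_of_max (Or.inr (Or.inr (Or.inl rfl))) hy2
    exact absurd (e1.trans e2.symm) hne
  case infB =>
    rw [hhx] at hy1 hy2
    have e1 := le_of_max (Or.inr (Or.inr (Or.inr rfl))) hy1
    have e2 := le_of_max (Or.inr (Or.inr (Or.inr rfl))) hy2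
    exact absurd (e1.trans e2.symm) hne
  case ver =>
    have c1 := hup _ (hhx ▸ Relation.ReflTransGen.single (PosCov.ver_verA v))
    have c2 := hup _ (hhx ▸ Relation.ReflTransGen.single (PosCov.ver_verB v))
    have c3 := hup _ (hhx ▸ Relation.ReflTransGen.head (PosCov.ver_verA v)
      (Relation.ReflTransGen.single (PosCov.verA_infA v)))
    have c4 := hup _ (hhx ▸ Relation.ReflTransGen.head (PosCov.ver_verB v)
      (Relation.ReflTransGen.single (PosCov.verB_infB v)))
    rw [hhx] at c1 c2 c3 c4
    rcases c1 with c1 | c1 | c1 <;> rcases c2 with c2 | c2 | c2 <;>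
      rcases c3 with c3 | c3 | c3 <;> rcases c4 with c4 | c4 | c4 <;>
      first
        | exact absurd c1 (by simp)
        | exact absurd c2 (by simp)
        | exact absurd c3 (by simp)
        | exact absurd c4 (by simp)
        | exact absurd (c1.trans c2.symm) (by simp)
        | exact absurd (c1.trans c3.symm) (by simp)
        | exact absurd (c1.trans c4.symm) (by simp)
        | exact absurd (c2.trans c3.symm) (by simp)
        | exact absurd (c2.trans c4.symm) (by simp)
        | exact absurd (c3.trans c4.symm) (by simp)
  case verA =>
    have c1 := hup _ (hhx ▸ Relation.ReflTransGen.single (PosCov.verA_infA v))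
    have c2 := hup _ (hhx ▸ (verA_le_top hεH v).1)
    have c3 := hup _ (hhx ▸ (verA_le_top hεH v).2)
    rw [hhx] at c1 c2 c3
    rcases c1 with c1 | c1 | c1 <;> rcases c2 with c2 | c2 | c2 <;>
      rcases c3 with c3 | c3 | c3 <;>
      first
        | exact absurd c1 (by simp)
        | exact absurd c2 (by simp)
        | exact absurd c3 (by simp)
        | exact absurd (c1.trans c2.symm) (by simp)
        | exact absurd (c1.trans c3.symm) (by simp)
        | exact absurd (c2.trans c3.symm) (by simp)
  case verB =>
    have c1 := hup _ (hhx ▸ Relation.ReflTransGen.single (PosCov.verB_infB v))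
    have c2 := hup _ (hhx ▸ (verB_le_top hεH v).1)
    have c3 := hup _ (hhx ▸ (verB_le_top hεH v).2)
    rw [hhx] at c1 c2 c3
    rcases c1 with c1 | c1 | c1 <;> rcases c2 with c2 | c2 | c2 <;>
      rcases c3 with c3 | c3 | c3 <;>
      first
        | exact absurd c1 (by simp)
        | exact absurd c2 (by simp)
        | exact absurd c3 (by simp)
        | exact absurd (c1.trans c2.symm) (by simp)
        | exact absurd (c1.trans c3.symm) (by simp)
        | exact absurd (c2.trans c3.symm) (by simp)
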